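/- arXiv:math/0604487 — 2 statements merged into one kernel-verified Lean document; each statement's English description precedes it below -/
import Mathlib

section
/- Every continuous curve in ℂ (the image of a continuous map from [0,1] with more than one point) is a locally connected continuum. -/
open Set Metric

/-- Two disjoint nonempty compact sets in `ℂ` are at positive distance. -/
lemma aux_compact_disjoint_dist_pos {s t : Set ℂ} (hs : IsCompact s) (ht : IsCompact t)
    (hsne : s.Nonempty) (htne : t.Nonempty) (hdisj : s ∩ t = ∅) :
    ∃ d : ℝ, 0 < d ∧ ∀ a ∈ s, ∀ b ∈ t, d ≤ dist a b := by
  obtain ⟨x, hx, hmin⟩ := (hs.prod ht).exists_isMinOn (hsne.prod htne)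
    ((continuous_fst.dist continuous_snd).continuousOn :
      ContinuousOn (fun q : ℂ × ℂ => dist q.1 q.2) (s ×ˢ t))
  refine ⟨dist x.1 x.2, ?_, ?_⟩
  · rw [dist_pos]
    intro hxe
    have hmem : x.1 ∈ s ∩ t := ⟨hx.1, hxe ▸ hx.2⟩
    rw [hdisj] at hmem
    exact hmem
  · intro a ha b hb
    exact isMinOn_iff.mp hmin (a, b) (Set.mk_mem_prod ha hb)

set_option maxHeartbeats 1000000 in
/-- Every continuous curve in `ℂ` (image of a continuous map on `[0,1]`, with more
than one point) is a locally connected continuum: it is compact and connected, and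
for every `ε > 0` there is `δ > 0` such that any two of its points at distance
less than `δ` lie in a subcontinuum of diameter less than `ε`. -/
theorem curve_is_locally_connected_continuum (γ : ℝ → ℂ)
    (hγ : ContinuousOn γ (Set.Icc 0 1)) (A : Set ℂ) (hA : A = γ '' Set.Icc 0 1)
    (hnt : A.Nontrivial) :
    IsCompact A ∧ IsConnected A ∧
    ∀ ε : ℝ, 0 < ε → ∃ δ : ℝ, 0 < δ ∧ ∀ a ∈ A, ∀ b ∈ A, dist a b < δ →
      ∃ B : Set ℂ, B ⊆ A ∧ a ∈ B ∧ b ∈ B ∧ IsCompact B ∧ IsConnected B ∧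
        B.Nontrivial ∧ Metric.diam B < ε := by
  subst hA
  refine ⟨isCompact_Icc.image_of_continuousOn hγ,
    (isConnected_Icc (by norm_num)).image γ hγ, ?_⟩
  intro ε hε
  obtain ⟨δ', hδ', hδ'2⟩ := Metric.uniformContinuousOn_iff.mp
    (isCompact_Icc.uniformContinuousOn_of_continuous hγ) (ε/3) (by linarith)
  obtain ⟨n, hn1, hninv⟩ : ∃ n : ℕ, 1 ≤ n ∧ (1:ℝ)/n < δ' := by
    obtain ⟨n0, hn0⟩ := exists_nat_one_div_lt hδ'
    exact ⟨n0 + 1, by omega, by exact_mod_cast hn0⟩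
  have hnpos : (0:ℝ) < n := by exact_mod_cast hn1
  set K : ℕ → Set ℂ := fun k => γ '' Icc ((k:ℝ)/n) ((k+1)/n) with hKdef
  have hIle : ∀ x : ℝ, x/n ≤ (x+1)/n :=
    fun x => (div_le_div_iff_of_pos_right hnpos).mpr (by linarith)
  have hIsub : ∀ k : ℕ, k < n → Icc ((k:ℝ)/n) ((k+1)/n) ⊆ Icc (0:ℝ) 1 := by
    intro k hk
    apply Icc_subset_Icc
    · positivity
    · rw [div_le_one hnpos]
      have : (k:ℝ) + 1 ≤ n := by exact_mod_cast hk
      linarith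
  have hKsub : ∀ k : ℕ, k < n → K k ⊆ γ '' Icc 0 1 :=
    fun k hk => image_mono (f := γ) (hIsub k hk)
  have hKne : ∀ k : ℕ, (K k).Nonempty :=
    fun k => (nonempty_Icc.mpr (hIle k)).image γ
  have hKconn : ∀ k : ℕ, k < n → IsConnected (K k) :=
    fun k hk => (isConnected_Icc (hIle k)).image γ (hγ.mono (hIsub k hk))
  have hKcomp : ∀ k : ℕ, k < n → IsCompact (K k) :=
    fun k hk => isCompact_Icc.image_of_continuousOn (hγ.mono (hIsub k hk))
  have hKdiam : ∀ k : ℕ, k < n → diam (K k) ≤ ε/3 := by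
    intro k hk
    apply diam_le_of_forall_dist_le (by linarith)
    rintro x ⟨u, hu, rfl⟩ y ⟨v, hv, rfl⟩
    have huv : dist u v < δ' := by
      rw [Real.dist_eq]
      have e : ((k:ℝ)+1)/n - (k:ℝ)/n = 1/n := by ring
      have h1 : |u - v| ≤ 1/n := by
        rw [abs_sub_le_iff]
        constructor <;> [linarith [hu.2, hv.1]; linarith [hv.2, hu.1]]
      linarith
    exact le_of_lt (hδ'2 u (hIsub k hk hu) v (hIsub k hk hv) huv)
  have hcover : ∀ s ∈ Icc (0:ℝ) 1, ∃ k : ℕ, k < n ∧ s ∈ Icc ((k:ℝ)/n) ((k+1)/n) := by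
    intro s hs
    refine ⟨min ⌊s * n⌋₊ (n-1), ?_, ?_, ?_⟩
    · exact lt_of_le_of_lt (min_le_right _ _) (by omega)
    · rw [div_le_iff₀ hnpos]
      calc ((min ⌊s * n⌋₊ (n-1) : ℕ) : ℝ) ≤ (⌊s * n⌋₊ : ℝ) := by
            exact_mod_cast min_le_left _ _
        _ ≤ s * n := Nat.floor_le (by nlinarith [hs.1])
    · rw [le_div_iff₀ hnpos]
      rcases le_or_gt ⌊s * n⌋₊ (n-1) with h | h
      · rw [min_eq_left h]
        have := Nat.lt_succ_floor (s * n)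
        push_cast at this ⊢
        linarith
      · rw [min_eq_right (le_of_lt h)]
        have h2 : s * n ≤ n := by nlinarith [hs.2]
        have e : ((n-1 : ℕ) : ℝ) + 1 = n := by
          rw [Nat.cast_sub hn1]; push_cast; ring
        linarith [e ▸ h2]
  have hadj : ∀ k : ℕ, γ (((k:ℝ)+1)/n) ∈ K k ∩ K (k+1) := by
    intro k
    have e : ((k+1 : ℕ):ℝ) = (k:ℝ)+1 := by push_cast; ring
    constructor
    · exact ⟨((k:ℝ)+1)/n, ⟨hIle k, le_refl _⟩, rfl⟩
    · refine ⟨((k:ℝ)+1)/n, ⟨?_, ?_⟩, rfl⟩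
      · rw [e]
      · rw [e]; exact hIle _
  -- choice of δ
  have key : ∀ p : ℕ × ℕ, ∃ d : ℝ, 0 < d ∧
      (p.1 < n → p.2 < n → K p.1 ∩ K p.2 = ∅ →
        ∀ a ∈ K p.1, ∀ b ∈ K p.2, d ≤ dist a b) := by
    intro p
    by_cases hc : p.1 < n ∧ p.2 < n ∧ K p.1 ∩ K p.2 = ∅
    · obtain ⟨h1, h2, h3⟩ := hc
      obtain ⟨d, hd0, hd⟩ := aux_compact_disjoint_dist_pos (hKcomp p.1 h1) (hKcomp p.2 h2)
        (hKne p.1) (hKne p.2) h3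
      exact ⟨d, hd0, fun _ _ _ => hd⟩
    · exact ⟨1, one_pos, fun h1 h2 h3 => absurd ⟨h1, h2, h3⟩ hc⟩
  choose d hd0 hd using key
  have hSne : (Finset.range n ×ˢ Finset.range n).Nonempty :=
    ⟨(0,0), by simp [Finset.mem_product]; omega⟩
  refine ⟨(Finset.range n ×ˢ Finset.range n).inf' hSne d, ?_, ?_⟩
  · rw [Finset.lt_inf'_iff]; intro p _; exact hd0 p
  rintro a ⟨s, hs, rfl⟩ b ⟨t, ht, rfl⟩ hab
  obtain ⟨i, hi, hsi⟩ := hcover s hs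
  obtain ⟨j, hj, htj⟩ := hcover t ht
  have haK : γ s ∈ K i := ⟨s, hsi, rfl⟩
  have hbK : γ t ∈ K j := ⟨t, htj, rfl⟩
  have hinter : (K i ∩ K j).Nonempty := by
    by_contra h
    rw [Set.not_nonempty_iff_eq_empty] at h
    have h1 := hd (i, j) hi hj h _ haK _ hbK
    have h2 : (Finset.range n ×ˢ Finset.range n).inf' hSne d ≤ d (i, j) :=
      Finset.inf'_le _ (by simp [Finset.mem_product, hi, hj])
    linarith
  obtain ⟨c, hc1, hc2⟩ := hinter
  by_cases hsub : (K i ∪ K j).Nontrivial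
  · refine ⟨K i ∪ K j, union_subset (hKsub i hi) (hKsub j hj), Or.inl haK, Or.inr hbK,
      (hKcomp i hi).union (hKcomp j hj),
      IsConnected.union ⟨c, hc1, hc2⟩ (hKconn i hi) (hKconn j hj), hsub, ?_⟩
    have := diam_union hc1 hc2
    simp only [dist_self] at this
    linarith [hKdiam i hi, hKdiam j hj]
  -- degenerate case: K i ∪ K j is a singleton {γ s}, so b = a; find a nontrivial block
  rw [Set.not_nontrivial_iff] at hsub
  have hba : γ t = γ s := hsub (Or.inr hbK) (Or.inl haK)
  have H : ∃ m, m < n ∧ γ s ∈ K m ∧ (K m).Nontrivial := by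
    by_contra h
    push_neg at h
    have mem_single : ∀ m, m < n → γ s ∈ K m → K m ⊆ {γ s} := by
      intro m hm hmem x hx
      by_contra hxne
      exact hxne (h m hm hmem hx hmem)
    have right : ∀ j, i ≤ j → j < n → γ s ∈ K j := by
      intro j hij
      induction j, hij using Nat.le_induction with
      | base => exact fun _ => haK
      | succ j hij ih =>
        intro hj1
        have hjn : j < n := by omega
        have h1 := mem_single j hjn (ih hjn) (hadj j).1
        rw [Set.mem_singleton_iff] at h1
        exact h1 ▸ (hadj j).2
    have left : ∀ j, j ≤ i → γ s ∈ K (i - j) := by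
      intro j hij
      induction j with
      | zero => simpa using haK
      | succ j ih =>
        have hji : j ≤ i := by omega
        have hm : i - j = (i - (j+1)) + 1 := by omega
        have hprev := ih hji
        rw [hm] at hprev
        have h1 := mem_single _ (by omega) hprev (hadj (i - (j+1))).2
        rw [Set.mem_singleton_iff] at h1
        exact h1 ▸ (hadj (i - (j+1))).1
    have hall : ∀ m, m < n → γ s ∈ K m := by
      intro m hm
      rcases le_or_gt i m with h' | h'
      · exact right m h' hm
      · have e : i - (i - m) = m := by omega
        exact e ▸ left (i - m) (by omega)
    obtain ⟨x, hx, y, hy, hxy⟩ := hnt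
    obtain ⟨u, hu, rfl⟩ := hx
    obtain ⟨v, hv, rfl⟩ := hy
    obtain ⟨ku, hku, hku2⟩ := hcover u hu
    obtain ⟨kv, hkv, hkv2⟩ := hcover v hv
    have e1 : γ u = γ s := mem_single ku hku (hall ku hku) ⟨u, hku2, rfl⟩
    have e2 : γ v = γ s := mem_single kv hkv (hall kv hkv) ⟨v, hkv2, rfl⟩
    exact hxy (e1.trans e2.symm)
  obtain ⟨m, hm, hmem, hmnt⟩ := H
  exact ⟨K m, hKsub m hm, hmem, hba ▸ hmem, hKcomp m hm, hKconn m hm, hmnt,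
    lt_of_le_of_lt (hKdiam m hm) (by linarith)⟩
end

section
/- Monotonicity of half-plane capacity: if K ⊆ K' are hulls in the upper half-plane, then the half-plane capacities satisfy a(K) ≤ a(K'). -/
open Filter Topology Set Complex

/-- The open upper half-plane. -/
def UpperHalf : Set ℂ := {z | 0 < z.im}


lemma deriv_ne_zero_of_injOn {U : Set ℂ} (hU : IsOpen U) {f : ℂ → ℂ}
    (hf : DifferentiableOn ℂ f U) (hinj : Set.InjOn f U) {z₀ : ℂ} (hz : z₀ ∈ U) :
    deriv f z₀ ≠ 0 := by
  intro hd0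
  have hA : AnalyticAt ℂ f z₀ := hf.analyticAt (hU.mem_nhds hz)
  have hAh : AnalyticAt ℂ (fun z => f z - f z₀) z₀ := hA.sub analyticAt_const
  have hUn : ∀ᶠ z in 𝓝 z₀, z ∈ U := hU.mem_nhds hz
  have hnot : ¬ (∀ᶠ z in 𝓝 z₀, f z - f z₀ = 0) := by
    intro h
    have h2 : ∀ᶠ z in 𝓝[≠] z₀, f z - f z₀ = 0 ∧ z ∈ U :=
      ((h.and hUn).filter_mono nhdsWithin_le_nhds)
    obtain ⟨z, ⟨hz1, hz2⟩, hz3⟩ := (h2.and self_mem_nhdsWithin).exists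
    exact hz3 (by simpa using hinj hz2 hz (sub_eq_zero.mp hz1))
  -- the order is a finite natural number n
  have horder : analyticOrderAt (fun z => f z - f z₀) z₀ ≠ ⊤ := by
    intro h; exact hnot (analyticOrderAt_eq_top.mp h)
  obtain ⟨n, hn⟩ := ENat.ne_top_iff_exists.mp horder
  obtain ⟨g₁, hg₁a, hg₁0, hev⟩ := (hAh.analyticOrderAt_eq_natCast (n := n)).mp hn.symm
  simp only [smul_eq_mul] at hev
  -- n ≠ 0
  have hn0 : n ≠ 0 := by
    rintro rfl
    have := hev.self_of_nhds
    simp at this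
    exact hg₁0 (by rw [← this])
  -- n ≠ 1
  have hderiv_h : deriv (fun z => f z - f z₀) z₀ = 0 := by
    rw [deriv_sub_const]; exact hd0
  have hn1 : n ≠ 1 := by
    rintro rfl
    have hd : HasDerivAt (fun z => (z - z₀) ^ 1 * g₁ z) (g₁ z₀) z₀ := by
      have h1 : HasDerivAt (fun z : ℂ => (z - z₀) ^ 1) 1 z₀ := by
        simpa using ((hasDerivAt_id z₀).sub_const z₀)
      have h2 : HasDerivAt g₁ (deriv g₁ z₀) z₀ := hg₁a.differentiableAt.hasDerivAt
      have := h1.mul h2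
      simpa [Pi.mul_def] using this
    have : deriv (fun z => f z - f z₀) z₀ = g₁ z₀ := by
      rw [Filter.EventuallyEq.deriv_eq hev]
      exact hd.deriv
    rw [hderiv_h] at this
    exact hg₁0 this.symm
  have hn2 : 2 ≤ n := by omega
  -- construct an analytic n-th root of g₁ near z₀
  set u := g₁ z₀ with hu
  have hu0 : u ≠ 0 := hg₁0
  set cc : ℂ := Complex.exp (Complex.log u / n) with hcc
  have hccn : cc ^ n = u := by
    rw [hcc, ← Complex.exp_nat_mul]
    rw [mul_div_cancel₀ _ (by exact_mod_cast hn0 : (n : ℂ) ≠ 0)]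
    exact Complex.exp_log hu0
  set r : ℂ → ℂ := fun z => Complex.exp (Complex.log (g₁ z / u) / n) * cc with hr
  have hr0 : r z₀ ≠ 0 := mul_ne_zero (Complex.exp_ne_zero _) (by rw [hcc]; exact Complex.exp_ne_zero _)
  have hg₁ne : ∀ᶠ z in 𝓝 z₀, g₁ z ≠ 0 :=
    hg₁a.continuousAt.eventually_ne hg₁0
  have hrn : ∀ᶠ z in 𝓝 z₀, r z ^ n = g₁ z := by
    filter_upwards [hg₁ne] with z hzne
    rw [hr]
    simp only [mul_pow, hccn, ← Complex.exp_nat_mul]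
    rw [mul_div_cancel₀ _ (by exact_mod_cast hn0 : (n : ℂ) ≠ 0)]
    rw [Complex.exp_log (div_ne_zero hzne hu0)]
    field_simp
  -- φ has a nonzero strict derivative at z₀
  set φ : ℂ → ℂ := fun z => (z - z₀) * r z with hφ
  have hrs : HasStrictDerivAt r (Complex.exp (Complex.log (g₁ z₀ / u) / n) * (deriv g₁ z₀ / u / (g₁ z₀ / u) / n) * cc) z₀ := by
    have h1 : HasStrictDerivAt (fun z => g₁ z / u) (deriv g₁ z₀ / u) z₀ :=
      (hg₁a.contDiffAt.hasStrictDerivAt (by simp : (⊤ : WithTop ℕ∞) ≠ 0)).div_const u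
    have h2 : HasStrictDerivAt (fun z => Complex.log (g₁ z / u)) (deriv g₁ z₀ / u / (g₁ z₀ / u)) z₀ := by
      apply h1.clog
      left
      rw [← hu, div_self hu0]; norm_num
    exact ((h2.div_const (n : ℂ)).cexp).mul_const cc
  have hφs : HasStrictDerivAt φ (r z₀) z₀ := by
    have h1 : HasStrictDerivAt (fun z : ℂ => z - z₀) 1 z₀ :=
      (hasStrictDerivAt_id z₀).sub_const z₀
    have := h1.mul hrs
    simpa [Pi.mul_def, hφ] using this
  have hmap : Filter.map φ (𝓝 z₀) = 𝓝 0 := by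
    have := hφs.map_nhds_eq hr0
    simpa [hφ] using this
  -- find the neighborhood where everything holds
  have hall : ∀ᶠ z in 𝓝 z₀, f z - f z₀ = φ z ^ n ∧ z ∈ U := by
    filter_upwards [hev, hrn, hUn] with z h1 h2 h3
    refine ⟨?_, h3⟩
    rw [h1, hφ]; simp [mul_pow, h2]
  obtain ⟨V, hVnhds, hVsub⟩ := hall.exists_mem
  have hVim : φ '' V ∈ 𝓝 (0 : ℂ) := by
    rw [← hmap]; exact Filter.image_mem_map hVnhds
  obtain ⟨ε, hε, hball⟩ := Metric.mem_nhds_iff.mp hVim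
  -- the root of unity
  set ζ : ℂ := Complex.exp (2 * Real.pi * Complex.I / n) with hζ
  have hζn : ζ ^ n = 1 := by
    rw [hζ, ← Complex.exp_nat_mul, mul_div_cancel₀ _ (by exact_mod_cast hn0 : (n : ℂ) ≠ 0)]
    exact Complex.exp_two_pi_mul_I
  have hζ1 : ζ ≠ 1 := by
    rw [hζ]
    intro h
    obtain ⟨k, hk⟩ := Complex.exp_eq_one_iff.mp h
    have h2 : (2 * Real.pi * Complex.I : ℂ) * (k : ℂ) = (2 * Real.pi * Complex.I) * (1 / n) := by
      rw [mul_comm, ← hk]; ring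
    have hne : (2 * Real.pi * Complex.I : ℂ) ≠ 0 := by
      simp [Real.pi_ne_zero, Complex.I_ne_zero]
    have h3 : (1 / n : ℂ) = k := (mul_left_cancel₀ hne h2).symm
    have h4 : (1 / n : ℝ) = (k : ℝ) := by
      have := congrArg Complex.re h3
      simpa using this
    have h5 : (0 : ℝ) < 1 / n := by positivity
    have h6 : (1 / n : ℝ) < 1 := by
      rw [div_lt_one (by positivity)]
      exact_mod_cast by omega
    rw [h4] at h5 h6
    have : (0 : ℤ) < k := by exact_mod_cast h5
    have : (k : ℤ) < 1 := by exact_mod_cast h6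
    omega
  have hζabs : ‖ζ‖ = 1 := by
    rw [hζ, Complex.norm_exp]
    norm_num
  -- pick the two points
  set t : ℂ := ((ε : ℂ) / 2) with ht
  have ht0 : t ≠ 0 := by
    rw [ht]
    simp only [ne_eq, div_eq_zero_iff, Complex.ofReal_eq_zero, OfNat.ofNat_ne_zero, or_false]
    exact ne_of_gt hε
  have htball : t ∈ Metric.ball (0 : ℂ) ε := by
    simp only [Metric.mem_ball, dist_zero_right, ht, norm_div,
      Complex.norm_real, Real.norm_eq_abs, Complex.norm_two]
    rw [abs_of_pos hε]
    linarith
  have hζtball : ζ * t ∈ Metric.ball (0 : ℂ) ε := by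
    simp only [Metric.mem_ball, dist_zero_right, norm_mul, hζabs, one_mul]
    simpa [Metric.mem_ball] using htball
  obtain ⟨z₁, hz₁V, hz₁⟩ := hball htball
  obtain ⟨z₂, hz₂V, hz₂⟩ := hball hζtball
  obtain ⟨he₁, hU₁⟩ := hVsub z₁ hz₁V
  obtain ⟨he₂, hU₂⟩ := hVsub z₂ hz₂V
  have hfeq : f z₁ = f z₂ := by
    have h : f z₁ - f z₀ = f z₂ - f z₀ := by
      rw [he₁, he₂, hz₁, hz₂, mul_pow, hζn, one_mul]
    exact sub_left_inj.mp h
  have hzz : z₁ = z₂ := hinj hU₁ hU₂ hfeq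
  rw [hzz, hz₂] at hz₁
  exact hζ1 (mul_right_cancel₀ ht0 (by rw [one_mul]; exact hz₁))

lemma holo_inverse {U V : Set ℂ} (hU : IsOpen U) {f : ℂ → ℂ}
    (hf : DifferentiableOn ℂ f U) (hb : Set.BijOn f U V) :
    ∃ G : ℂ → ℂ, DifferentiableOn ℂ G V ∧ Set.MapsTo G V U ∧
      (∀ z ∈ U, G (f z) = z) ∧ (∀ w ∈ V, f (G w) = w) := by
  have hinv := hb.invOn_invFunOn
  set G := Function.invFunOn f U with hG
  have hmaps : Set.MapsTo G V U := hb.surjOn.mapsTo_invFunOn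
  have hleft : ∀ z ∈ U, G (f z) = z := fun z hz => hinv.1 hz
  have hright : ∀ w ∈ V, f (G w) = w := fun w hw => hinv.2 hw
  refine ⟨G, ?_, hmaps, hleft, hright⟩
  intro w hw
  set z := G w with hz
  have hzU : z ∈ U := hmaps hw
  have hfz : f z = w := hright w hw
  have hd : deriv f z ≠ 0 := deriv_ne_zero_of_injOn hU hf hb.injOn hzU
  have hsd : HasStrictDerivAt f (deriv f z) z :=
    ((hf.analyticAt (hU.mem_nhds hzU)).contDiffAt).hasStrictDerivAt (by simp : (⊤ : WithTop ℕ∞) ≠ 0)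
  have hGl : ∀ᶠ x in 𝓝 z, G (f x) = x := by
    filter_upwards [hU.mem_nhds hzU] with x hx
    exact hleft x hx
  have : HasStrictDerivAt G (deriv f z)⁻¹ (f z) := hsd.to_local_left_inverse hd hGl
  rw [hfz] at this
  exact this.hasDerivAt.differentiableAt.differentiableWithinAt



lemma upperHalf_isOpen : IsOpen UpperHalf :=
  isOpen_lt continuous_const Complex.continuous_im

-- |p - q| < |p - conj q| for p q in the upper half plane
lemma abs_sub_lt_abs_sub_conj {p q : ℂ} (hp : p ∈ UpperHalf) (hq : q ∈ UpperHalf) :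
    ‖p - q‖ < ‖p - (starRingEnd ℂ) q‖ := by
  have hp' : 0 < p.im := hp
  have hq' : 0 < q.im := hq
  have key : Complex.normSq (p - q) + 4 * p.im * q.im = Complex.normSq (p - (starRingEnd ℂ) q) := by
    simp only [Complex.normSq_apply, Complex.sub_re, Complex.sub_im, Complex.conj_re,
      Complex.conj_im]
    ring
  have h1 : Complex.normSq (p - q) < Complex.normSq (p - (starRingEnd ℂ) q) := by nlinarith
  have := Complex.sq_norm (p - q)
  have := Complex.sq_norm (p - (starRingEnd ℂ) q)
  nlinarith [norm_nonneg (p - q), norm_nonneg (p - (starRingEnd ℂ) q)]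

-- the Cayley-type map into the unit disk
lemma cayley_mem_ball {b x : ℂ} (hb : b ∈ UpperHalf) (hx : x ∈ UpperHalf) :
    (x - b) / (x - (starRingEnd ℂ) b) ∈ Metric.ball (0 : ℂ) 1 := by
  have h := abs_sub_lt_abs_sub_conj hx hb
  have hden : ‖x - (starRingEnd ℂ) b‖ > 0 :=
    lt_of_le_of_lt (norm_nonneg _) h
  simp only [Metric.mem_ball, dist_zero_right, norm_div]
  rw [div_lt_one hden]
  exact h

lemma sub_conj_ne_zero {b x : ℂ} (hb : b ∈ UpperHalf) (hx : x ∈ UpperHalf) :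
    x - (starRingEnd ℂ) b ≠ 0 := by
  intro h
  have := abs_sub_lt_abs_sub_conj hx hb
  rw [h] at this
  simp at this
  exact absurd this (not_lt_of_ge (norm_nonneg _))

-- inverse Cayley maps ball into upper half plane
lemma inv_cayley_mem_upperHalf {a ζ : ℂ} (ha : a ∈ UpperHalf) (hζ : ζ ∈ Metric.ball (0 : ℂ) 1) :
    (a - (starRingEnd ℂ) a * ζ) / (1 - ζ) ∈ UpperHalf := by
  have ha' : 0 < a.im := ha
  have hζ' : Complex.normSq ζ < 1 := by
    have : ‖ζ‖ < 1 := by simpa using hζ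
    nlinarith [Complex.sq_norm ζ, norm_nonneg ζ]
  have hζ1 : (1 : ℂ) - ζ ≠ 0 := by
    intro h
    have : ζ = 1 := by linear_combination -h
    rw [this] at hζ'
    simp [Complex.normSq_one] at hζ'
  have hns : 0 < Complex.normSq (1 - ζ) := Complex.normSq_pos.mpr hζ1
  show 0 < ((a - (starRingEnd ℂ) a * ζ) / (1 - ζ)).im
  rw [Complex.div_im]
  have hkey : (a - (starRingEnd ℂ) a * ζ).im * (1 - ζ).re -
      (a - (starRingEnd ℂ) a * ζ).re * (1 - ζ).im = a.im * (1 - Complex.normSq ζ) := by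
    simp only [Complex.sub_re, Complex.sub_im, Complex.mul_re, Complex.mul_im,
      Complex.conj_re, Complex.conj_im, Complex.one_re, Complex.one_im, Complex.normSq_apply]
    ring
  have : (a - (starRingEnd ℂ) a * ζ).im * (1 - ζ).re / Complex.normSq (1 - ζ) -
      (a - (starRingEnd ℂ) a * ζ).re * (1 - ζ).im / Complex.normSq (1 - ζ) =
      a.im * (1 - Complex.normSq ζ) / Complex.normSq (1 - ζ) := by
    rw [div_sub_div_same, hkey]
  rw [this]
  have h1 : 0 < 1 - Complex.normSq ζ := by linarith
  positivity

-- Schwarz–Pick for the upper half plane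
lemma schwarz_pick_upperHalf {f : ℂ → ℂ} (hd : DifferentiableOn ℂ f UpperHalf)
    (hm : Set.MapsTo f UpperHalf UpperHalf) {z w : ℂ} (hz : z ∈ UpperHalf) (hw : w ∈ UpperHalf) :
    ‖f z - f w‖ * ‖z - (starRingEnd ℂ) w‖ ≤
      ‖z - w‖ * ‖f z - (starRingEnd ℂ) (f w)‖ := by
  set a := w
  set b := f w with hb
  have hbU : b ∈ UpperHalf := hm hw
  set ψ : ℂ → ℂ := fun ζ => (a - (starRingEnd ℂ) a * ζ) / (1 - ζ) with hψ
  set Cb : ℂ → ℂ := fun x => (x - b) / (x - (starRingEnd ℂ) b) with hCb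
  set F : ℂ → ℂ := fun ζ => Cb (f (ψ ζ)) with hF
  have hball1 : ∀ ζ ∈ Metric.ball (0 : ℂ) 1, (1 : ℂ) - ζ ≠ 0 := by
    intro ζ hζ h
    have : ζ = 1 := by linear_combination -h
    rw [this] at hζ
    simp at hζ
  have hψmaps : ∀ ζ ∈ Metric.ball (0 : ℂ) 1, ψ ζ ∈ UpperHalf := fun ζ hζ =>
    inv_cayley_mem_upperHalf hw hζ
  have hFd : DifferentiableOn ℂ F (Metric.ball (0 : ℂ) 1) := by
    intro ζ hζ
    have h1 : DifferentiableWithinAt ℂ ψ (Metric.ball (0 : ℂ) 1) ζ := by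
      apply DifferentiableWithinAt.div
      · exact (differentiableWithinAt_const _).sub
          ((differentiableWithinAt_const _).mul differentiableWithinAt_id)
      · exact (differentiableWithinAt_const _).sub differentiableWithinAt_id
      · exact hball1 ζ hζ
    have h2 : DifferentiableWithinAt ℂ (fun ζ => f (ψ ζ)) (Metric.ball (0 : ℂ) 1) ζ :=
      (hd (ψ ζ) (hψmaps ζ hζ)).comp ζ h1 (fun x hx => hψmaps x hx)
    apply DifferentiableWithinAt.div
    · exact h2.sub (differentiableWithinAt_const _)
    · exact h2.sub (differentiableWithinAt_const _)
    · exact sub_conj_ne_zero hbU (hm (hψmaps ζ hζ))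
  have hFmaps : Set.MapsTo F (Metric.ball (0 : ℂ) 1) (Metric.ball (0 : ℂ) 1) := by
    intro ζ hζ
    exact cayley_mem_ball hbU (hm (hψmaps ζ hζ))
  have hF0 : F 0 = 0 := by
    have : ψ 0 = a := by simp [hψ]
    simp only [hF, this, hCb, ← hb]
    simp
    exact Or.inl (sub_eq_zero.mpr rfl)
  set ζ := (z - a) / (z - (starRingEnd ℂ) a) with hζdef
  have hζball : ζ ∈ Metric.ball (0 : ℂ) 1 := cayley_mem_ball hw hz
  have hψζ : ψ ζ = z := by
    have hne1 : z - (starRingEnd ℂ) a ≠ 0 := sub_conj_ne_zero hw hz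
    have hne2 : (1 : ℂ) - ζ ≠ 0 := hball1 ζ hζball
    rw [hψ]
    rw [div_eq_iff hne2, hζdef]
    field_simp
    ring
  have key := by
    have := Complex.dist_le_dist_of_mapsTo_ball hFd
      (by rw [hF0]; exact hFmaps.mono_right Metric.ball_subset_closedBall) hζball
    rwa [hF0] at this
  rw [dist_zero_right, dist_zero_right] at key
  have hkey2 : ‖Cb (f z)‖ ≤ ‖ζ‖ := by
    have : F ζ = Cb (f z) := by show Cb (f (ψ ζ)) = Cb (f z); rw [hψζ]
    rw [← this]
    simpa using key
  have hd1 : 0 < ‖f z - (starRingEnd ℂ) b‖ := by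
    have h := abs_sub_lt_abs_sub_conj (hm hz) hbU
    exact lt_of_le_of_lt (norm_nonneg _) h
  have hd2 : 0 < ‖z - (starRingEnd ℂ) a‖ := by
    have h := abs_sub_lt_abs_sub_conj hz hw
    exact lt_of_le_of_lt (norm_nonneg _) h
  rw [hCb, hζdef] at hkey2
  simp only [norm_div] at hkey2
  rw [div_le_div_iff₀ hd1 hd2] at hkey2
  exact hkey2


lemma sqrt_sub_tendsto (x : ℝ) :
    Tendsto (fun t : ℝ => Real.sqrt (x^2 + t^2) - t) atTop (𝓝 0) := by
  have hub : ∀ᶠ t : ℝ in atTop, Real.sqrt (x^2 + t^2) - t ≤ x^2/2 / t := by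
    filter_upwards [eventually_gt_atTop (0:ℝ)] with t ht
    have h1 : Real.sqrt (x^2 + t^2) ≤ t + x^2/2/t := by
      have hd : t * (x^2/2/t) = x^2/2 := by field_simp
      have h2 : Real.sqrt (x^2 + t^2) ≤ Real.sqrt ((t + x^2/2/t)^2) := by
        apply Real.sqrt_le_sqrt
        nlinarith [sq_nonneg (x^2/2/t)]
      rwa [Real.sqrt_sq (by positivity)] at h2
    linarith
  have hlb : ∀ᶠ t : ℝ in atTop, (0:ℝ) ≤ Real.sqrt (x^2 + t^2) - t := by
    filter_upwards [eventually_gt_atTop (0:ℝ)] with t ht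
    have h := Real.sqrt_le_sqrt (show t^2 ≤ x^2 + t^2 by nlinarith)
    rw [Real.sqrt_sq ht.le] at h
    linarith
  have hdiv : Tendsto (fun t : ℝ => x^2/2 / t) atTop (𝓝 0) :=
    tendsto_const_nhds.div_atTop tendsto_id
  exact tendsto_of_tendsto_of_tendsto_of_le_of_le' tendsto_const_nhds hdiv hlb hub

lemma lim_abs_sub (C : ℂ) (v : ℝ → ℂ)
    (hv : Tendsto (fun R : ℝ => v R - Complex.I * R) atTop (𝓝 0)) :
    Tendsto (fun R : ℝ => ‖C - v R‖ - R) atTop (𝓝 (-C.im)) := by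
  have habs : ∀ R : ℝ, ‖C - Complex.I * R‖ =
      Real.sqrt (C.re^2 + (R - C.im)^2) := by
    intro R
    rw [Complex.norm_def, Complex.normSq_apply]
    congr 1
    simp [Complex.sub_re, Complex.sub_im, Complex.mul_re, Complex.mul_im]
    ring
  have h1 : Tendsto (fun R : ℝ => ‖C - Complex.I * R‖ - R) atTop (𝓝 (-C.im)) := by
    have h2 : Tendsto (fun R : ℝ => Real.sqrt (C.re^2 + (R - C.im)^2) - (R - C.im)) atTop (𝓝 0) := by
      have := (sqrt_sub_tendsto C.re).comp (tendsto_atTop_add_const_right atTop (-C.im) tendsto_id)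
      refine this.congr (fun R => ?_)
      simp [Function.comp, sub_eq_add_neg]
    have h3 : (fun R : ℝ => ‖C - Complex.I * R‖ - R) =
        (fun R : ℝ => (Real.sqrt (C.re^2 + (R - C.im)^2) - (R - C.im)) + (-C.im)) := by
      funext R
      rw [habs R]
      ring
    rw [h3]
    simpa using h2.add tendsto_const_nhds
  have h2 : Tendsto (fun R : ℝ => ‖C - v R‖ - ‖C - Complex.I * R‖)
      atTop (𝓝 0) := by
    have hg : Tendsto (fun R : ℝ => ‖v R - Complex.I * R‖) atTop (𝓝 0) := by
      have := hv.norm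
      simpa using this
    apply squeeze_zero_norm _ hg
    intro R
    have h := abs_norm_sub_norm_le (C - v R) (C - Complex.I * R)
    calc |‖C - v R‖ - ‖C - Complex.I * R‖|
        ≤ ‖(C - v R) - (C - Complex.I * R)‖ := h
      _ = ‖v R - Complex.I * R‖ := by
          rw [show (C - v R) - (C - Complex.I * R) = -(v R - Complex.I * R) by ring,
            norm_neg]
  have : (fun R : ℝ => ‖C - v R‖ - R) =
      (fun R : ℝ => (‖C - v R‖ - ‖C - Complex.I * R‖) +
        (‖C - Complex.I * R‖ - R)) := by
    funext R; ring
  rw [this]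
  simpa using h2.add h1


/-- Monotonicity of half-plane capacity: if `K ⊆ K'` are hulls in the upper
half-plane, with hydrodynamically normalized conformal maps
`g : ℍ∖K → ℍ`, `g' : ℍ∖K' → ℍ` having expansions `z + a/z + o(1/z)` and
`z + a'/z + o(1/z)` at infinity, then `a ≤ a'`. -/
theorem half_plane_capacity_mono
    (K K' : Set ℂ) (hsub : K ⊆ K')
    (hKb : Bornology.IsBounded K) (hK'b : Bornology.IsBounded K')
    (hKh : K ⊆ {z : ℂ | 0 ≤ z.im}) (hK'h : K' ⊆ {z : ℂ | 0 ≤ z.im})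
    (hKcl : closure (K ∩ UpperHalf) = K) (hK'cl : closure (K' ∩ UpperHalf) = K')
    (hKs : SimplyConnectedSpace (UpperHalf \ K : Set ℂ))
    (hK's : SimplyConnectedSpace (UpperHalf \ K' : Set ℂ))
    (g g' : ℂ → ℂ)
    (hg : DifferentiableOn ℂ g (UpperHalf \ K))
    (hgb : Set.BijOn g (UpperHalf \ K) UpperHalf)
    (hg' : DifferentiableOn ℂ g' (UpperHalf \ K'))
    (hg'b : Set.BijOn g' (UpperHalf \ K') UpperHalf)
    (aK aK' : ℝ)
    (ha : Filter.Tendsto (fun z => z * (g z - z))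
      ((Filter.comap (fun z : ℂ => ‖z‖) Filter.atTop) ⊓
        Filter.principal (UpperHalf \ K)) (nhds (aK : ℂ)))
    (ha' : Filter.Tendsto (fun z => z * (g' z - z))
      ((Filter.comap (fun z : ℂ => ‖z‖) Filter.atTop) ⊓
        Filter.principal (UpperHalf \ K')) (nhds (aK' : ℂ))) :
    aK ≤ aK' := by
  -- K' is closed, so UpperHalf \ K' is open
  have hK'closed : IsClosed K' := by rw [← hK'cl]; exact isClosed_closure
  have hU'open : IsOpen (UpperHalf \ K') := upperHalf_isOpen.sdiff hK'closed
  -- the inverse of g'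
  obtain ⟨G, hGd, hGm, hGl, hGr⟩ := holo_inverse hU'open hg' hg'b
  have hsub' : (UpperHalf \ K' : Set ℂ) ⊆ UpperHalf \ K := fun z hz => ⟨hz.1, fun h => hz.2 (hsub h)⟩
  -- the composed map f = g ∘ G : ℍ → ℍ
  set f : ℂ → ℂ := fun w => g (G w) with hf
  have hfd : DifferentiableOn ℂ f UpperHalf :=
    hg.comp hGd (fun w hw => hsub' (hGm hw))
  have hfm : Set.MapsTo f UpperHalf UpperHalf := fun w hw => hgb.mapsTo (hsub' (hGm hw))
  -- the imaginary axis is eventually in both domains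
  obtain ⟨r, hr⟩ := hK'b.subset_closedBall (0 : ℂ)
  have hIy : ∀ᶠ y : ℝ in atTop, Complex.I * y ∈ UpperHalf \ K' := by
    filter_upwards [eventually_gt_atTop (max r 0)] with y hy
    have hy0 : 0 < y := lt_of_le_of_lt (le_max_right r 0) hy
    constructor
    · show 0 < (Complex.I * y).im
      simp [hy0]
    · intro hmem
      have := hr hmem
      rw [Metric.mem_closedBall, dist_zero_right] at this
      simp only [norm_mul, Complex.norm_I, Complex.norm_real, Real.norm_eq_abs, one_mul] at this
      rw [abs_of_pos hy0] at this
      have := lt_of_le_of_lt (le_max_left r 0) hy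
      linarith
  have hIyK : ∀ᶠ y : ℝ in atTop, Complex.I * y ∈ UpperHalf \ K := by
    filter_upwards [hIy] with y hy
    exact hsub' hy
  -- tendsto the hypothesis filters
  have hnorm : Tendsto (fun y : ℝ => ‖Complex.I * (y : ℂ)‖) atTop atTop := by
    have : (fun y : ℝ => ‖Complex.I * (y : ℂ)‖) = fun y : ℝ => |y| := by
      funext y
      simp
    rw [this]
    exact tendsto_abs_atTop_atTop
  have htendK : Tendsto (fun y : ℝ => Complex.I * (y : ℂ)) atTop
      ((Filter.comap (fun z : ℂ => ‖z‖) Filter.atTop) ⊓ Filter.principal (UpperHalf \ K)) :=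
    tendsto_inf.mpr ⟨tendsto_comap_iff.mpr hnorm, tendsto_principal.mpr hIyK⟩
  have htendK' : Tendsto (fun y : ℝ => Complex.I * (y : ℂ)) atTop
      ((Filter.comap (fun z : ℂ => ‖z‖) Filter.atTop) ⊓ Filter.principal (UpperHalf \ K')) :=
    tendsto_inf.mpr ⟨tendsto_comap_iff.mpr hnorm, tendsto_principal.mpr hIy⟩
  have hSg : Tendsto (fun y : ℝ => (Complex.I * y) * (g (Complex.I * y) - Complex.I * y))
      atTop (𝓝 (aK : ℂ)) := ha.comp htendK
  have hSg' : Tendsto (fun y : ℝ => (Complex.I * y) * (g' (Complex.I * y) - Complex.I * y))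
      atTop (𝓝 (aK' : ℂ)) := ha'.comp htendK'
  -- inverse tendsto
  have hinv : Tendsto (fun y : ℝ => (Complex.I * (y : ℂ))⁻¹) atTop (𝓝 0) := by
    rw [tendsto_zero_iff_norm_tendsto_zero]
    have : (fun y : ℝ => ‖(Complex.I * (y : ℂ))⁻¹‖) =ᶠ[atTop] fun y : ℝ => y⁻¹ := by
      filter_upwards [eventually_gt_atTop (0:ℝ)] with y hy
      simp [abs_of_pos hy]
    exact Tendsto.congr' this.symm tendsto_inv_atTop_zero
  have hgd : Tendsto (fun y : ℝ => g (Complex.I * y) - Complex.I * y) atTop (𝓝 0) := by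
    have hm := hSg.mul hinv
    rw [mul_zero] at hm
    apply hm.congr'
    filter_upwards [eventually_gt_atTop (0:ℝ)] with y hy
    have hne : Complex.I * (y : ℂ) ≠ 0 := by
      simp [Complex.I_ne_zero, Complex.ofReal_ne_zero, ne_of_gt hy]
    rw [mul_comm, ← mul_assoc, inv_mul_cancel₀ hne, one_mul]
  have hg'd : Tendsto (fun y : ℝ => g' (Complex.I * y) - Complex.I * y) atTop (𝓝 0) := by
    have hm := hSg'.mul hinv
    rw [mul_zero] at hm
    apply hm.congr'
    filter_upwards [eventually_gt_atTop (0:ℝ)] with y hy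
    have hne : Complex.I * (y : ℂ) ≠ 0 := by
      simp [Complex.I_ne_zero, Complex.ofReal_ne_zero, ne_of_gt hy]
    rw [mul_comm, ← mul_assoc, inv_mul_cancel₀ hne, one_mul]
  -- key step : Im g' (iy) ≤ Im g (iy) eventually
  have hIm : ∀ᶠ y : ℝ in atTop, (g' (Complex.I * y)).im ≤ (g (Complex.I * y)).im := by
    filter_upwards [hIy] with y hy
    set A : ℂ := g (Complex.I * y) with hA
    set B : ℂ := g' (Complex.I * y) with hB
    have hAU : A ∈ UpperHalf := hgb.mapsTo (hsub' hy)
    have hBU : B ∈ UpperHalf := hg'b.mapsTo hy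
    have hfB : f B = A := by
      show g (G (g' (Complex.I * y))) = A
      rw [hGl _ hy]
    -- four asymptotic quantities
    have hq1 : Tendsto (fun R : ℝ => ‖A - g (Complex.I * R)‖ - R)
        atTop (𝓝 (-A.im)) := lim_abs_sub A _ hgd
    have hq2 : Tendsto (fun R : ℝ => ‖B - (starRingEnd ℂ) (g' (Complex.I * R))‖ - R)
        atTop (𝓝 (B.im)) := by
      have h := lim_abs_sub ((starRingEnd ℂ) B) _ hg'd
      have heq : (fun R : ℝ => ‖(starRingEnd ℂ) B - g' (Complex.I * R)‖ - R) =
          (fun R : ℝ => ‖B - (starRingEnd ℂ) (g' (Complex.I * R))‖ - R) := by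
        funext R
        congr 1
        rw [← Complex.norm_conj ((starRingEnd ℂ) B - g' (Complex.I * R))]
        congr 1
        simp [map_sub]
      rw [heq] at h
      simpa using h
    have hq3 : Tendsto (fun R : ℝ => ‖B - g' (Complex.I * R)‖ - R)
        atTop (𝓝 (-B.im)) := lim_abs_sub B _ hg'd
    have hq4 : Tendsto (fun R : ℝ => ‖A - (starRingEnd ℂ) (g (Complex.I * R))‖ - R)
        atTop (𝓝 (A.im)) := by
      have h := lim_abs_sub ((starRingEnd ℂ) A) _ hgd
      have heq : (fun R : ℝ => ‖(starRingEnd ℂ) A - g (Complex.I * R)‖ - R) =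
          (fun R : ℝ => ‖A - (starRingEnd ℂ) (g (Complex.I * R))‖ - R) := by
        funext R
        congr 1
        rw [← Complex.norm_conj ((starRingEnd ℂ) A - g (Complex.I * R))]
        congr 1
        simp [map_sub]
      rw [heq] at h
      simpa using h
    -- the Schwarz-Pick inequality, eventually in R
    have hineq : ∀ᶠ R : ℝ in atTop,
        ‖A - g (Complex.I * R)‖ * ‖B - (starRingEnd ℂ) (g' (Complex.I * R))‖
        ≤ ‖B - g' (Complex.I * R)‖ *
          ‖A - (starRingEnd ℂ) (g (Complex.I * R))‖ := by
      filter_upwards [hIy] with R hR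
      have hbR : g' (Complex.I * R) ∈ UpperHalf := hg'b.mapsTo hR
      have hfbR : f (g' (Complex.I * R)) = g (Complex.I * R) := by
        show g (G (g' (Complex.I * R))) = g (Complex.I * R)
        rw [hGl _ hR]
      have := schwarz_pick_upperHalf hfd hfm hBU hbR
      rwa [hfB, hfbR] at this
    -- pass to the limit
    set p1 : ℝ → ℝ := fun R => ‖A - g (Complex.I * R)‖ with hp1
    set p2 : ℝ → ℝ := fun R => ‖B - (starRingEnd ℂ) (g' (Complex.I * R))‖ with hp2
    set p3 : ℝ → ℝ := fun R => ‖B - g' (Complex.I * R)‖ with hp3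
    set p4 : ℝ → ℝ := fun R => ‖A - (starRingEnd ℂ) (g (Complex.I * R))‖ with hp4
    have hL : Tendsto (fun R => p1 R * p2 R / R - R) atTop (𝓝 (-A.im + B.im)) := by
      have hprod : Tendsto (fun R => (p1 R - R) * (p2 R - R) / R) atTop (𝓝 0) :=
        Tendsto.div_atTop (hq1.mul hq2) tendsto_id
      have hsum := (hq1.add hq2).add hprod
      rw [add_zero] at hsum
      apply hsum.congr'
      filter_upwards [eventually_gt_atTop (0:ℝ)] with R hR
      field_simp
      ring
    have hR' : Tendsto (fun R => p3 R * p4 R / R - R) atTop (𝓝 (-B.im + A.im)) := by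
      have hprod : Tendsto (fun R => (p3 R - R) * (p4 R - R) / R) atTop (𝓝 0) :=
        Tendsto.div_atTop (hq3.mul hq4) tendsto_id
      have hsum := (hq3.add hq4).add hprod
      rw [add_zero] at hsum
      apply hsum.congr'
      filter_upwards [eventually_gt_atTop (0:ℝ)] with R hR
      field_simp
      ring
    have hle : -A.im + B.im ≤ -B.im + A.im := by
      apply le_of_tendsto_of_tendsto hL hR'
      filter_upwards [hineq, eventually_gt_atTop (0:ℝ)] with R h1 h2
      have hdiv : p1 R * p2 R / R ≤ p3 R * p4 R / R := by gcongr
      linarith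
    linarith
  -- conclude
  have hT : Tendsto (fun y : ℝ =>
      ((-Complex.I) * ((Complex.I * y) * (g (Complex.I * y) - Complex.I * y)) -
       (-Complex.I) * ((Complex.I * y) * (g' (Complex.I * y) - Complex.I * y))).im)
      atTop (𝓝 (((-Complex.I) * aK - (-Complex.I) * aK').im)) := by
    have h1 := (hSg.const_mul (-Complex.I)).sub (hSg'.const_mul (-Complex.I))
    exact (Complex.continuous_im.tendsto _).comp h1
  have hval : ((-Complex.I) * (aK : ℂ) - (-Complex.I) * (aK' : ℂ)).im = aK' - aK := by
    simp [Complex.sub_im, Complex.mul_im, Complex.neg_re, Complex.neg_im, Complex.I_re,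
      Complex.I_im, Complex.ofReal_re, Complex.ofReal_im]
    ring
  rw [hval] at hT
  have hnonneg : ∀ᶠ y : ℝ in atTop,
      0 ≤ ((-Complex.I) * ((Complex.I * y) * (g (Complex.I * y) - Complex.I * y)) -
       (-Complex.I) * ((Complex.I * y) * (g' (Complex.I * y) - Complex.I * y))).im := by
    filter_upwards [hIm, eventually_ge_atTop (0:ℝ)] with y h1 h2
    have hsimp : ((-Complex.I) * ((Complex.I * y) * (g (Complex.I * y) - Complex.I * y)) -
        (-Complex.I) * ((Complex.I * y) * (g' (Complex.I * y) - Complex.I * y))) =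
        (y : ℂ) * (g (Complex.I * y) - g' (Complex.I * y)) := by
      ring_nf
      simp [Complex.I_sq]
      ring
    rw [hsimp]
    have him : ((y:ℂ) * (g (Complex.I * y) - g' (Complex.I * y))).im =
        y * (g (Complex.I * y) - g' (Complex.I * y)).im := by
      simp [Complex.mul_im]
    rw [him]
    have : 0 ≤ (g (Complex.I * y) - g' (Complex.I * y)).im := by
      rw [Complex.sub_im]; linarith
    positivity
  have := ge_of_tendsto hT hnonneg
  linarith
end
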